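/- Suppose G is an SG-basis for an ideal I of A. Then an element a ∈ A belongs to I if and only if a si-reduces to 0 via G. -/

import Mathlib

open MvPolynomial

/-- A term order on the monomials (exponent vectors) of a polynomial ring in `n`
variables: a well-founded linear order compatible with multiplication of power
products (i.e. with addition of exponent vectors). -/
structure TermOrder (n : ℕ) where
  lo : LinearOrder (Fin n →₀ ℕ)
  wf : WellFounded lo.lt
  add_le_add : ∀ a b c : Fin n →₀ ℕ, lo.le a b → lo.le (a + c) (b + c)

namespace TermOrder

variable {n : ℕ} {R : Type*} [CommRing R]

/-- `lp p`: the leading power product (exponent vector) of `p`; junk value `0`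
for the zero polynomial. -/
noncomputable def lp (ord : TermOrder n) (p : MvPolynomial (Fin n) R) : Fin n →₀ ℕ :=
  WithBot.unbotD 0 (@Finset.max _ ord.lo p.support)

/-- `lc p`: the leading coefficient of `p` (0 if `p = 0`). -/
noncomputable def lc (ord : TermOrder n) (p : MvPolynomial (Fin n) R) : R :=
  p.coeff (ord.lp p)

/-- `ltm p`: the leading term `lc(p)·lp(p)` of `p` (0 if `p = 0`). -/
noncomputable def ltm (ord : TermOrder n) (p : MvPolynomial (Fin n) R) : MvPolynomial (Fin n) R :=
  monomial (ord.lp p) (ord.lc p)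

end TermOrder

variable {n : ℕ} {R : Type*} [CommRing R]

/-- An `F`-power product: a finite product `∏ fᵢ^{eᵢ}` with `fᵢ ∈ F`. -/
def IsPowerProduct (F : Set (MvPolynomial (Fin n) R)) (q : MvPolynomial (Fin n) R) : Prop :=
  ∃ e : MvPolynomial (Fin n) R →₀ ℕ, (e.support : Set (MvPolynomial (Fin n) R)) ⊆ F ∧
    q = e.prod (fun f k => f ^ k)

/-- `F` is a SAGBI basis for the `R`-subalgebra `A`: `R[Lt A] = R[Lt F]`. -/
def IsSAGBI (ord : TermOrder n) (A : Subalgebra R (MvPolynomial (Fin n) R))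
    (F : Set (MvPolynomial (Fin n) R)) : Prop :=
  Algebra.adjoin R (ord.ltm '' (A : Set (MvPolynomial (Fin n) R))) =
    Algebra.adjoin R (ord.ltm '' F)

/-- One step of s-reduction of `g` to `h` via `F`. -/
def SStep (ord : TermOrder n) (F : Set (MvPolynomial (Fin n) R))
    (g h : MvPolynomial (Fin n) R) : Prop :=
  ∃ (β : Fin n →₀ ℕ) (N : ℕ) (q : Fin N → MvPolynomial (Fin n) R) (r : Fin N → R),
    g.coeff β ≠ 0 ∧
    (∀ i, IsPowerProduct F (q i) ∧ q i ≠ 0 ∧ ord.lp (q i) = β) ∧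
    g.coeff β = ∑ i, r i * ord.lc (q i) ∧
    h = g - ∑ i, C (r i) * q i

/-- `g` s-reduces to `h` via `F`: a finite chain of one-step s-reductions. -/
def SReduce (ord : TermOrder n) (F : Set (MvPolynomial (Fin n) R)) :
    MvPolynomial (Fin n) R → MvPolynomial (Fin n) R → Prop :=
  Relation.ReflTransGen (SStep ord F)

/-- One step of si-reduction of `h` to `h'` via `G`, relative to the subalgebra `A`. -/
def SiStep (ord : TermOrder n) (A : Subalgebra R (MvPolynomial (Fin n) R))
    (G : Set (MvPolynomial (Fin n) R)) (h h' : MvPolynomial (Fin n) R) : Prop :=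
  ∃ (α : Fin n →₀ ℕ) (M : ℕ) (g a : Fin M → MvPolynomial (Fin n) R),
    h.coeff α ≠ 0 ∧
    (∀ i, g i ∈ G) ∧ (∀ i, a i ∈ A) ∧
    (∀ i, a i * g i ≠ 0 ∧ ord.lp (a i * g i) = α) ∧
    (monomial α (h.coeff α) : MvPolynomial (Fin n) R) = ∑ i, ord.ltm (a i * g i) ∧
    h' = h - ∑ i, a i * g i

/-- `h` si-reduces to `h'` via `G`: a finite chain of one-step si-reductions. -/
def SiReduce (ord : TermOrder n) (A : Subalgebra R (MvPolynomial (Fin n) R))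
    (G : Set (MvPolynomial (Fin n) R)) :
    MvPolynomial (Fin n) R → MvPolynomial (Fin n) R → Prop :=
  Relation.ReflTransGen (SiStep ord A G)

/-- The subalgebra `R[Lt A]` generated by the leading terms of elements of `A`. -/
noncomputable def LtAlg (ord : TermOrder n) (A : Subalgebra R (MvPolynomial (Fin n) R)) :
    Subalgebra R (MvPolynomial (Fin n) R) :=
  Algebra.adjoin R (ord.ltm '' (A : Set (MvPolynomial (Fin n) R)))

/-- The leading term of an element of `A`, as an element of `R[Lt A]`. -/
noncomputable def ltA (ord : TermOrder n) (A : Subalgebra R (MvPolynomial (Fin n) R))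
    (a : A) : LtAlg ord A :=
  ⟨ord.ltm (a : MvPolynomial (Fin n) R), Algebra.subset_adjoin ⟨a, a.2, rfl⟩⟩

/-- `G ⊆ I` is a SAGBI–Gröbner basis (SG-basis) for the ideal `I` of `A`:
`Lt G` generates the ideal `⟨Lt I⟩` in the subalgebra `R[Lt A]`. -/
def IsSGBasis (ord : TermOrder n) (A : Subalgebra R (MvPolynomial (Fin n) R))
    (I : Ideal A) (G : Set A) : Prop :=
  Ideal.span
      ((Subtype.val ⁻¹' (ord.ltm '' (Subtype.val '' G)) : Set (LtAlg ord A))) =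
  Ideal.span
      ((Subtype.val ⁻¹' (ord.ltm '' (Subtype.val '' (I : Set A))) : Set (LtAlg ord A)))

-- auxiliary lemmas
namespace TermOrder

variable {n : ℕ} {R : Type*} [CommRing R] (ord : TermOrder n) {p q : MvPolynomial (Fin n) R}

lemma le_of_lt' {a b : Fin n →₀ ℕ} (h : ord.lo.lt a b) : ord.lo.le a b :=
  ((ord.lo.lt_iff_le_not_ge a b).mp h).1

lemma ne_of_lt' {a b : Fin n →₀ ℕ} (h : ord.lo.lt a b) : a ≠ b := by
  intro he
  exact ((ord.lo.lt_iff_le_not_ge a b).mp h).2 (he ▸ ord.lo.le_refl a)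

lemma lt_of_le_of_ne' {a b : Fin n →₀ ℕ} (h : ord.lo.le a b) (hne : a ≠ b) :
    ord.lo.lt a b := by
  rw [ord.lo.lt_iff_le_not_ge]
  exact ⟨h, fun h2 => hne (ord.lo.le_antisymm _ _ h h2)⟩

lemma eq_or_lt_of_le' {a b : Fin n →₀ ℕ} (h : ord.lo.le a b) :
    a = b ∨ ord.lo.lt a b := by
  by_cases he : a = b
  · exact Or.inl he
  · exact Or.inr (ord.lt_of_le_of_ne' h he)

lemma lt_of_lt_of_le' {a b c : Fin n →₀ ℕ} (h : ord.lo.lt a b) (h2 : ord.lo.le b c) :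
    ord.lo.lt a c := by
  rw [ord.lo.lt_iff_le_not_ge] at h ⊢
  exact ⟨ord.lo.le_trans _ _ _ h.1 h2, fun h3 => h.2 (ord.lo.le_trans _ _ _ h2 h3)⟩

lemma lp_eq_max' (h : p.support.Nonempty) :
    ord.lp p = @Finset.max' _ ord.lo p.support h := by
  rw [lp, ← @Finset.coe_max' _ ord.lo _ h, WithBot.unbotD_coe]

lemma lp_mem (hp : p ≠ 0) : ord.lp p ∈ p.support := by
  have h : p.support.Nonempty := MvPolynomial.support_nonempty.mpr hp
  rw [lp_eq_max' ord h]
  exact @Finset.max'_mem _ ord.lo _ h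

lemma le_lp {β : Fin n →₀ ℕ} (hβ : β ∈ p.support) : ord.lo.le β (ord.lp p) := by
  have h : p.support.Nonempty := ⟨β, hβ⟩
  rw [lp_eq_max' ord h]
  exact @Finset.le_max' _ ord.lo _ _ hβ

lemma lc_ne_zero (hp : p ≠ 0) : ord.lc p ≠ 0 := by
  have := ord.lp_mem (p := p) hp
  rwa [MvPolynomial.mem_support_iff] at this

lemma lt_add_right {a b : Fin n →₀ ℕ} (h : ord.lo.lt a b) (c : Fin n →₀ ℕ) :
    ord.lo.lt (a + c) (b + c) := by
  refine ord.lt_of_le_of_ne' (ord.add_le_add _ _ _ (ord.le_of_lt' h)) ?_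
  intro he
  exact ord.ne_of_lt' h (add_right_cancel he)

lemma add_le_add_left' {b c : Fin n →₀ ℕ} (h : ord.lo.le b c) (a : Fin n →₀ ℕ) :
    ord.lo.le (a + b) (a + c) := by
  rw [add_comm a b, add_comm a c]
  exact ord.add_le_add _ _ _ h

lemma ltm_zero : ord.ltm (0 : MvPolynomial (Fin n) R) = 0 := by
  simp [ltm, lc]

section Domain
variable [IsDomain R]

omit [IsDomain R] in
set_option maxHeartbeats 1000000 in
lemma coeff_mul_lp (hp : p ≠ 0) (hq : q ≠ 0) :
    (p * q).coeff (ord.lp p + ord.lp q) = ord.lc p * ord.lc q := by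
  rw [MvPolynomial.coeff_mul]
  refine Finset.sum_eq_single_of_mem (ord.lp p, ord.lp q)
    (Finset.HasAntidiagonal.mem_antidiagonal.mpr rfl) ?_
  · intro x hx hne
    rw [Finset.HasAntidiagonal.mem_antidiagonal] at hx
    by_contra hzero
    have h1 : x.1 ∈ p.support := by
      rw [MvPolynomial.mem_support_iff]; intro h; exact hzero (by rw [h, zero_mul])
    have h2 : x.2 ∈ q.support := by
      rw [MvPolynomial.mem_support_iff]; intro h; exact hzero (by rw [h, mul_zero])
    have hx1 := ord.le_lp h1
    have hx2 := ord.le_lp h2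
    rcases ord.eq_or_lt_of_le' hx1 with h | h
    · apply hne
      rw [h] at hx
      exact Prod.ext h (add_left_cancel hx)
    · have h3 := ord.lt_add_right h x.2
      have h4 := ord.add_le_add_left' hx2 (ord.lp p)
      exact ord.ne_of_lt' (ord.lt_of_lt_of_le' h3 h4) hx

lemma lp_mul (hp : p ≠ 0) (hq : q ≠ 0) : ord.lp (p * q) = ord.lp p + ord.lp q := by
  classical
  have hmem : ord.lp p + ord.lp q ∈ (p * q).support := by
    rw [MvPolynomial.mem_support_iff, ord.coeff_mul_lp hp hq]
    exact mul_ne_zero (ord.lc_ne_zero hp) (ord.lc_ne_zero hq)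
  refine ord.lo.le_antisymm _ _ ?_ (ord.le_lp hmem)
  have hpq : p * q ≠ 0 := by
    intro h; rw [h] at hmem; simp at hmem
  have hs := MvPolynomial.support_mul p q (ord.lp_mem hpq)
  rw [Finset.mem_add] at hs
  obtain ⟨u, hu, v, hv, huv⟩ := hs
  rw [← huv]
  exact ord.lo.le_trans _ _ _ (ord.add_le_add _ _ _ (ord.le_lp hu))
    (ord.add_le_add_left' (ord.le_lp hv) _)

lemma lc_mul (hp : p ≠ 0) (hq : q ≠ 0) : ord.lc (p * q) = ord.lc p * ord.lc q := by
  rw [lc, ord.lp_mul hp hq, ord.coeff_mul_lp hp hq]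

lemma ltm_mul (p q : MvPolynomial (Fin n) R) : ord.ltm (p * q) = ord.ltm p * ord.ltm q := by
  by_cases hp : p = 0
  · rw [hp, zero_mul, ltm_zero, zero_mul]
  by_cases hq : q = 0
  · rw [hq, mul_zero, ltm_zero, mul_zero]
  rw [ltm, ltm, ltm, ord.lp_mul hp hq, ord.lc_mul hp hq, MvPolynomial.monomial_mul]

omit [IsDomain R] in
lemma lp_C (r : R) (hr : r ≠ 0) : ord.lp (C r : MvPolynomial (Fin n) R) = 0 := by
  classical
  have hC : (C r : MvPolynomial (Fin n) R) ≠ 0 := by simpa using hr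
  have h := ord.lp_mem hC
  rw [show (C r : MvPolynomial (Fin n) R) = monomial 0 r from rfl] at h
  rw [MvPolynomial.support_monomial, if_neg hr, Finset.mem_singleton] at h
  exact h

omit [IsDomain R] in
lemma ltm_C (r : R) (hr : r ≠ 0) : ord.ltm (C r : MvPolynomial (Fin n) R) = C r := by
  rw [ltm, lc, ord.lp_C r hr]
  simp [MvPolynomial.coeff_C]

lemma ltm_one : ord.ltm (1 : MvPolynomial (Fin n) R) = 1 := by
  rw [show (1 : MvPolynomial (Fin n) R) = C 1 by simp, ord.ltm_C 1 one_ne_zero]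

end Domain
end TermOrder

section Aux

variable {n : ℕ} {R : Type*} [CommRing R]

lemma closure_ltm [IsDomain R] (ord : TermOrder n) (A : Subalgebra R (MvPolynomial (Fin n) R))
    {m : MvPolynomial (Fin n) R}
    (hm : m ∈ Submonoid.closure (ord.ltm '' (A : Set (MvPolynomial (Fin n) R)))) :
    ∃ b, b ∈ A ∧ m = ord.ltm b := by
  induction hm using Submonoid.closure_induction with
  | mem x hx => obtain ⟨b, hb, rfl⟩ := hx; exact ⟨b, hb, rfl⟩
  | one => exact ⟨1, A.one_mem, (ord.ltm_one).symm⟩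
  | mul x y hx hy ihx ihy =>
      obtain ⟨b, hb, rfl⟩ := ihx
      obtain ⟨c, hc, rfl⟩ := ihy
      exact ⟨b * c, A.mul_mem hb hc, (ord.ltm_mul b c).symm⟩

set_option maxHeartbeats 2000000 in
set_option synthInstance.maxHeartbeats 1000000 in
/-- The key extraction: if `b ∈ I` is nonzero, its leading term is a sum
`∑ ltm (aaᵢ · gᵢ)` with `gᵢ ∈ G`, `aaᵢ ∈ A` and `lp (aaᵢ gᵢ) = lp b`. -/
lemma key_step [IsDomain R] (ord : TermOrder n) (A : Subalgebra R (MvPolynomial (Fin n) R))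
    (I : Ideal A) (G : Set A) (hSG : IsSGBasis ord A I G) {b : A} (hb : b ∈ I)
    (hb0 : (b : MvPolynomial (Fin n) R) ≠ 0) :
    ∃ (M : ℕ) (g aa : Fin M → A), (∀ i, g i ∈ G) ∧
      (∀ i, (aa i : MvPolynomial (Fin n) R) * (g i : MvPolynomial (Fin n) R) ≠ 0 ∧
        ord.lp ((aa i : MvPolynomial (Fin n) R) * (g i : MvPolynomial (Fin n) R)) =
          ord.lp (b : MvPolynomial (Fin n) R)) ∧
      ((monomial (ord.lp (b : MvPolynomial (Fin n) R))
          ((b : MvPolynomial (Fin n) R).coeff (ord.lp (b : MvPolynomial (Fin n) R)))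
        : MvPolynomial (Fin n) R) =
        ∑ i, ord.ltm ((aa i : MvPolynomial (Fin n) R) * (g i : MvPolynomial (Fin n) R))) := by
  classical
  -- Step 1: the leading term of b lies in the span of leading terms of G
  have hmem : (⟨ord.ltm (b : MvPolynomial (Fin n) R),
        Algebra.subset_adjoin ⟨(b : MvPolynomial (Fin n) R), b.2, rfl⟩⟩ : LtAlg ord A) ∈
      Ideal.span (Subtype.val ⁻¹' (ord.ltm '' (Subtype.val '' G)) : Set (LtAlg ord A)) := by
    rw [hSG]
    exact Ideal.subset_span
      (show _ ∈ Subtype.val ⁻¹' _ from ⟨(b : MvPolynomial (Fin n) R), ⟨b, hb, rfl⟩, rfl⟩)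
  obtain ⟨c, hcsupp, hcsum⟩ := Submodule.mem_span_set.mp hmem
  have h2 : ∑ t ∈ c.support, ((c t : MvPolynomial (Fin n) R) * ((t : LtAlg ord A) :
      MvPolynomial (Fin n) R)) = ord.ltm (b : MvPolynomial (Fin n) R) := by
    have h := congrArg (Subtype.val) hcsum
    simpa [Finsupp.sum, smul_eq_mul] using h
  -- Step 2: choose the G-element corresponding to each t in the support of c
  have hG : ∀ t : c.support, ∃ gt : A, gt ∈ G ∧
      ((t : LtAlg ord A) : MvPolynomial (Fin n) R) = ord.ltm (gt : MvPolynomial (Fin n) R) := by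
    rintro ⟨t, ht⟩
    obtain ⟨x, ⟨g0, hg0, rfl⟩, hx⟩ := hcsupp ht
    exact ⟨g0, hg0, hx.symm⟩
  choose gfun hgG hgval using hG
  -- Step 3: expand each coefficient c t over the monoid closure
  have hD : ∀ t : c.support, ∃ d : MvPolynomial (Fin n) R →₀ R,
      ((d.support : Set (MvPolynomial (Fin n) R)) ⊆
        (Submonoid.closure (ord.ltm '' (A : Set (MvPolynomial (Fin n) R))) :
          Set (MvPolynomial (Fin n) R))) ∧
      (d.sum fun m r => r • m) = ((c t : LtAlg ord A) : MvPolynomial (Fin n) R) := by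
    intro t
    have h3 : ((c t : LtAlg ord A) : MvPolynomial (Fin n) R) ∈
        Submodule.span R ((Submonoid.closure (ord.ltm '' (A : Set (MvPolynomial (Fin n) R))) :
          Set (MvPolynomial (Fin n) R))) := by
      rw [← Algebra.adjoin_eq_span]
      exact (c (t : LtAlg ord A)).2
    exact Submodule.mem_span_set.mp h3
  choose dfun hdsupp hdsum using hD
  -- Step 4: each monomial in the closure is a leading term of an element of A
  have hB : ∀ (t : c.support) (m : (dfun t).support),
      ∃ bb, bb ∈ A ∧ (m : MvPolynomial (Fin n) R) = ord.ltm bb := by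
    intro t m
    exact closure_ltm ord A (hdsupp t m.2)
  choose bfun hbA hbval using hB
  -- Step 5: the big sum identity over the sigma type
  have h2' : ∑ t : c.support, ((c (t : LtAlg ord A) : LtAlg ord A) : MvPolynomial (Fin n) R) *
      ord.ltm ((gfun t : A) : MvPolynomial (Fin n) R) = ord.ltm (b : MvPolynomial (Fin n) R) := by
    rw [← h2, ← Finset.sum_coe_sort c.support
      (fun t => ((c t : LtAlg ord A) : MvPolynomial (Fin n) R) *
        ((t : LtAlg ord A) : MvPolynomial (Fin n) R))]
    exact Finset.sum_congr rfl fun t _ => by rw [hgval t]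
  have h3' : ∀ t : c.support,
      ((c (t : LtAlg ord A) : LtAlg ord A) : MvPolynomial (Fin n) R) *
        ord.ltm ((gfun t : A) : MvPolynomial (Fin n) R) =
      ∑ m : (dfun t).support, ((dfun t) (m : MvPolynomial (Fin n) R)) •
        (((m : MvPolynomial (Fin n) R)) * ord.ltm ((gfun t : A) : MvPolynomial (Fin n) R)) := by
    intro t
    rw [← hdsum t, Finsupp.sum,
      ← Finset.sum_coe_sort ((dfun t).support) (fun m => (dfun t) m • m), Finset.sum_mul]
    exact Finset.sum_congr rfl fun m _ => smul_mul_assoc _ _ _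
  have hbig : ord.ltm (b : MvPolynomial (Fin n) R) =
      ∑ i : Σ t : c.support, (dfun t).support, ((dfun i.1) (i.2 : MvPolynomial (Fin n) R)) •
        (((i.2 : MvPolynomial (Fin n) R)) * ord.ltm ((gfun i.1 : A) : MvPolynomial (Fin n) R)) := by
    rw [← h2', Finset.sum_congr rfl fun t _ => h3' t, ← Finset.univ_sigma_univ,
      Finset.sum_sigma]
  -- Step 6: rewrite each term as ltm (aaᵢ · gᵢ)
  set r : (Σ t : c.support, (dfun t).support) → R :=
    fun i => (dfun i.1) (i.2 : MvPolynomial (Fin n) R) with hr_def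
  set aaP : (Σ t : c.support, (dfun t).support) → A :=
    fun i => (algebraMap R A) (r i) * ⟨bfun i.1 i.2, hbA i.1 i.2⟩ with haaP_def
  set f : (Σ t : c.support, (dfun t).support) → MvPolynomial (Fin n) R :=
    fun i => (aaP i : MvPolynomial (Fin n) R) * ((gfun i.1 : A) : MvPolynomial (Fin n) R)
    with hf_def
  have hterm : ∀ i, (r i) • (((i.2 : MvPolynomial (Fin n) R)) *
      ord.ltm ((gfun i.1 : A) : MvPolynomial (Fin n) R)) = ord.ltm (f i) := by
    intro i
    have hrne : r i ≠ 0 := Finsupp.mem_support_iff.mp i.2.2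
    have hco : (aaP i : MvPolynomial (Fin n) R) = C (r i) * bfun i.1 i.2 := by
      simp [haaP_def, MvPolynomial.algebraMap_eq]
    rw [hf_def]
    simp only
    rw [hco, MvPolynomial.smul_eq_C_mul, hbval i.1 i.2, mul_assoc,
      ord.ltm_mul (C (r i)), ord.ltm_C _ hrne, ord.ltm_mul]
  have hbig2 : ord.ltm (b : MvPolynomial (Fin n) R) = ∑ i, ord.ltm (f i) := by
    rw [hbig]
    exact Finset.sum_congr rfl fun i _ => hterm i
  -- Step 7: filter down to the terms with the right leading power product
  set J : Finset (Σ t : c.support, (dfun t).support) :=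
    Finset.univ.filter (fun i => f i ≠ 0 ∧ ord.lp (f i) = ord.lp (b : MvPolynomial (Fin n) R))
    with hJ_def
  have hcsum2 : ord.lc (b : MvPolynomial (Fin n) R) = ∑ i ∈ J, ord.lc (f i) := by
    have h4 := congrArg (MvPolynomial.coeff (ord.lp (b : MvPolynomial (Fin n) R))) hbig2
    rw [TermOrder.ltm, MvPolynomial.coeff_monomial, if_pos rfl, MvPolynomial.coeff_sum] at h4
    rw [h4]
    refine (Finset.sum_subset (Finset.subset_univ J) ?_).symm.trans
      (Finset.sum_congr rfl fun i hi => ?_)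
    · intro i _ hiJ
      by_cases h0 : f i = 0
      · rw [h0, ord.ltm_zero]; simp
      · have hne : ord.lp (f i) ≠ ord.lp (b : MvPolynomial (Fin n) R) := by
          intro he; exact hiJ (Finset.mem_filter.mpr ⟨Finset.mem_univ _, h0, he⟩)
        rw [TermOrder.ltm, MvPolynomial.coeff_monomial, if_neg hne]
    · obtain ⟨hne, hlp⟩ := (Finset.mem_filter.mp hi).2
      rw [TermOrder.ltm, MvPolynomial.coeff_monomial, if_pos hlp]
  have hJ : ((monomial (ord.lp (b : MvPolynomial (Fin n) R))
      ((b : MvPolynomial (Fin n) R).coeff (ord.lp (b : MvPolynomial (Fin n) R))))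
      : MvPolynomial (Fin n) R) = ∑ i ∈ J, ord.ltm (f i) := by
    have h5 : ∑ i ∈ J, ord.ltm (f i) =
        ∑ i ∈ J, (monomial (ord.lp (b : MvPolynomial (Fin n) R)) (ord.lc (f i)) :
          MvPolynomial (Fin n) R) :=
      Finset.sum_congr rfl fun i hi => by
        rw [TermOrder.ltm, (Finset.mem_filter.mp hi).2.2]
    rw [h5, ← map_sum, ← hcsum2]
    rfl
  -- Step 8: reindex by Fin J.card
  refine ⟨J.card, fun k => gfun ((J.equivFin.symm k : J) : Σ t : c.support, (dfun t).support).1,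
    fun k => aaP ((J.equivFin.symm k : J) : Σ t : c.support, (dfun t).support), ?_, ?_, ?_⟩
  · intro k; exact hgG _
  · intro k
    exact (Finset.mem_filter.mp ((J.equivFin.symm k : J)).2).2
  · rw [hJ, ← Finset.sum_coe_sort J (fun i => ord.ltm (f i))]
    exact Fintype.sum_equiv J.equivFin _ _ fun x => by simp [hf_def]

end Aux


set_option maxHeartbeats 1000000 in
set_option synthInstance.maxHeartbeats 400000 in
/-- if `G` is an SG-basis for the ideal `I` of `A`, then `a ∈ A`
belongs to `I` iff `a` si-reduces to `0` via `G`. -/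
theorem mem_ideal_iff_sireduce_zero {n : ℕ} {R : Type*} [CommRing R] [IsDomain R]
    [IsNoetherianRing R] (ord : TermOrder n)
    (A : Subalgebra R (MvPolynomial (Fin n) R)) (I : Ideal A) (G : Set A)
    (hGI : G ⊆ (I : Set A)) (hSG : IsSGBasis ord A I G) :
    ∀ a : A, a ∈ I ↔ SiReduce ord A (Subtype.val '' G) (a : MvPolynomial (Fin n) R) 0 := by
  intro a
  constructor
  · intro ha
    have main : ∀ α : Fin n →₀ ℕ, ∀ b : A, b ∈ I →
        ord.lp (b : MvPolynomial (Fin n) R) = α →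
        SiReduce ord A (Subtype.val '' G) (b : MvPolynomial (Fin n) R) 0 := by
      intro α
      refine ord.wf.induction
        (C := fun α => ∀ b : A, b ∈ I → ord.lp (b : MvPolynomial (Fin n) R) = α →
          SiReduce ord A (Subtype.val '' G) (b : MvPolynomial (Fin n) R) 0) α ?_
      intro α ih b hbI hlp
      by_cases hb0 : (b : MvPolynomial (Fin n) R) = 0
      · rw [hb0]; exact Relation.ReflTransGen.refl
      obtain ⟨M, g, aa, hgG, hcond, hmon⟩ := key_step ord A I G hSG hbI hb0
      set s : A := ∑ i, aa i * g i with hs_def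
      have hsval : ((s : A) : MvPolynomial (Fin n) R) =
          ∑ i, (aa i : MvPolynomial (Fin n) R) * (g i : MvPolynomial (Fin n) R) := by
        rw [hs_def]; push_cast; rfl
      have hsI : s ∈ I := Ideal.sum_mem _ fun i _ => I.mul_mem_left (aa i) (hGI (hgG i))
      have hstep : SiStep ord A (Subtype.val '' G) (b : MvPolynomial (Fin n) R)
          (((b - s : A) : MvPolynomial (Fin n) R)) := by
        refine ⟨ord.lp (b : MvPolynomial (Fin n) R), M,
          fun i => ((g i : A) : MvPolynomial (Fin n) R),
          fun i => ((aa i : A) : MvPolynomial (Fin n) R),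
          ord.lc_ne_zero hb0, fun i => ⟨g i, hgG i, rfl⟩, fun i => (aa i).2, hcond, hmon, ?_⟩
        rw [AddSubgroupClass.coe_sub, hsval]
      have hterm : ∀ i : Fin M,
          (ord.ltm ((aa i : MvPolynomial (Fin n) R) * (g i : MvPolynomial (Fin n) R))).coeff
            (ord.lp (b : MvPolynomial (Fin n) R)) =
          ((aa i : MvPolynomial (Fin n) R) * (g i : MvPolynomial (Fin n) R)).coeff
            (ord.lp (b : MvPolynomial (Fin n) R)) := by
        intro i
        rw [TermOrder.ltm, MvPolynomial.coeff_monomial, if_pos (hcond i).2, TermOrder.lc,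
          (hcond i).2]
      have hlc : ((b - s : A) : MvPolynomial (Fin n) R).coeff
          (ord.lp (b : MvPolynomial (Fin n) R)) = 0 := by
        have h4 := congrArg (MvPolynomial.coeff (ord.lp (b : MvPolynomial (Fin n) R))) hmon
        rw [MvPolynomial.coeff_monomial, if_pos rfl, MvPolynomial.coeff_sum] at h4
        rw [AddSubgroupClass.coe_sub, hsval, MvPolynomial.coeff_sub, MvPolynomial.coeff_sum,
          h4, Finset.sum_congr rfl fun i _ => hterm i, sub_self]
      have hsup : ∀ γ ∈ ((b - s : A) : MvPolynomial (Fin n) R).support,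
          ord.lo.lt γ (ord.lp (b : MvPolynomial (Fin n) R)) := by
        intro γ hγ
        have hne : γ ≠ ord.lp (b : MvPolynomial (Fin n) R) := by
          intro he
          rw [MvPolynomial.mem_support_iff, he, hlc] at hγ
          exact hγ rfl
        refine ord.lt_of_le_of_ne' ?_ hne
        rw [MvPolynomial.mem_support_iff, AddSubgroupClass.coe_sub, hsval,
          MvPolynomial.coeff_sub] at hγ
        by_cases hbγ : (b : MvPolynomial (Fin n) R).coeff γ ≠ 0
        · exact ord.le_lp (MvPolynomial.mem_support_iff.mpr hbγ)
        · push_neg at hbγ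
          have h6 : (∑ i, (aa i : MvPolynomial (Fin n) R) *
              (g i : MvPolynomial (Fin n) R)).coeff γ ≠ 0 := by
            intro h7
            rw [hbγ, h7] at hγ
            simp at hγ
          rw [MvPolynomial.coeff_sum] at h6
          obtain ⟨i, -, hi⟩ := Finset.exists_ne_zero_of_sum_ne_zero h6
          have h8 := ord.le_lp (MvPolynomial.mem_support_iff.mpr hi)
          rwa [(hcond i).2] at h8
      by_cases hb' : ((b - s : A) : MvPolynomial (Fin n) R) = 0
      · refine Relation.ReflTransGen.head hstep ?_
        rw [hb']
      · refine Relation.ReflTransGen.head hstep ?_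
        have hltn := hsup _ (ord.lp_mem hb')
        rw [hlp] at hltn
        exact ih _ hltn (b - s) (I.sub_mem hbI hsI) rfl
    exact main _ a ha rfl
  · intro h
    have haux : ∀ p : MvPolynomial (Fin n) R, SiReduce ord A (Subtype.val '' G) p 0 →
        p ∈ Subtype.val '' (I : Set A) := by
      intro p hp
      induction hp using Relation.ReflTransGen.head_induction_on with
      | refl => exact ⟨0, I.zero_mem, rfl⟩
      | head hstep hrest ih =>
        obtain ⟨α, M, g, a2, hcoeff, hgG2, haA, hprodcond, hmon2, heq⟩ := hstep
        obtain ⟨c', hc'I, hcval⟩ := ih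
        have hgch : ∀ i, ∃ gi : A, gi ∈ G ∧ ((gi : A) : MvPolynomial (Fin n) R) = g i := by
          intro i
          obtain ⟨x, hx, he⟩ := hgG2 i
          exact ⟨x, hx, he⟩
        choose gA hgA hgAval using hgch
        refine ⟨c' + ∑ i, (⟨a2 i, haA i⟩ : A) * gA i,
          I.add_mem hc'I (Ideal.sum_mem _ fun i _ => I.mul_mem_left _ (hGI (hgA i))), ?_⟩
        push_cast
        rw [hcval, heq]
        have h9 : ∀ i : Fin M, ((⟨a2 i, haA i⟩ : A) : MvPolynomial (Fin n) R) *
            ((gA i : A) : MvPolynomial (Fin n) R) = a2 i * g i := fun i => by rw [hgAval i]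
        rw [Finset.sum_congr rfl fun i _ => h9 i]
        ring
    obtain ⟨a', ha'I, hval⟩ := haux _ h
    exact Subtype.val_injective hval ▸ ha'I
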